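/- Let (Y,Z,X) be binary random variables with all conditional probabilities P(Y=1|Z=z,X=x) positive, and write the log-mean regression parameters α = log P(Y=1|Z=0,X=0), θ_{Y|Z.X} = log[P(Y=1|Z=1,X=0)/P(Y=1|Z=0,X=0)], θ_{Y|X.Z} = log[P(Y=1|Z=0,X=1)/P(Y=1|Z=0,X=0)], θ_{Y|ZX} = log RR_{Y|ZX} (the interaction), so that log P(Y=1|Z=z,X=x) = α + θ_{Y|Z.X}·z + θ_{Y|X.Z}·x + θ_{Y|ZX}·zx for all z,x ∈ {0,1}. Similarly write α_Z = log P(Z=1|X=0), θ_{Z|X} = log[P(Z=1|X=1)/P(Z=1|X=0)], and θ_{Y|X} = log[P(Y=1|X=1)/P(Y=1|X=0)]. Then θ_{Y|X} = θ_{Y|X.Z} + λ, where λ = log{[exp(θ_{Y|Z.X}+θ_{Y|ZX})·exp(α_Z+θ_{Z|X}) + 1 − exp(α_Z+θ_{Z|X})] / [exp(θ_{Y|Z.X})·exp(α_Z) + 1 − exp(α_Z)]}. -/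

import Mathlib

open MeasureTheory

variable {Ω : Type*} [MeasurableSpace Ω]

/-- Event that binary variable `W` takes value `b`. -/
def ev (W : Ω → Bool) (b : Bool) : Set Ω := {ω | W ω = b}

/-- Probability of a set. -/
noncomputable def pr (μ : Measure Ω) (A : Set Ω) : ℝ := (μ A).toReal

/-- Conditional probability P(A | B). -/
noncomputable def cpr (μ : Measure Ω) (A B : Set Ω) : ℝ := pr μ (A ∩ B) / pr μ B

/-- P(Y = 1 | Z = z, X = x). -/
noncomputable def pY (μ : Measure Ω) (Y Z X : Ω → Bool) (z x : Bool) : ℝ :=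
  cpr μ (ev Y true) (ev Z z ∩ ev X x)

/-- P(Y = 1 | X = x). -/
noncomputable def pYm (μ : Measure Ω) (Y X : Ω → Bool) (x : Bool) : ℝ :=
  cpr μ (ev Y true) (ev X x)

/-- P(Y = 1 | Z = z). -/
noncomputable def pYz (μ : Measure Ω) (Y Z : Ω → Bool) (z : Bool) : ℝ :=
  cpr μ (ev Y true) (ev Z z)

/-- P(Z = 1 | X = x). -/
noncomputable def pZ (μ : Measure Ω) (Z X : Ω → Bool) (x : Bool) : ℝ :=
  cpr μ (ev Z true) (ev X x)

/-- P(Y^D = 1 | Z = z, X = x) for the product outcome over D. -/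
noncomputable def pD {V : Type*} (μ : Measure Ω) (Y : V → Ω → Bool) (D : Finset V)
    (Z X : Ω → Bool) (z x : Bool) : ℝ :=
  cpr μ {ω | ∀ v ∈ D, Y v ω = true} (ev Z z ∩ ev X x)

/-- P(Y^D = 1 | X = x) for the product outcome over D. -/
noncomputable def pDm {V : Type*} (μ : Measure Ω) (Y : V → Ω → Bool) (D : Finset V)
    (X : Ω → Bool) (x : Bool) : ℝ :=
  cpr μ {ω | ∀ v ∈ D, Y v ω = true} (ev X x)

/-- P(Z_U = i_U | X = x) for a family of intermediate variables. -/
noncomputable def pZU {U : Type*} (μ : Measure Ω) (Z : U → Ω → Bool) (X : Ω → Bool)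
    (i : U → Bool) (x : Bool) : ℝ :=
  cpr μ {ω | ∀ u, Z u ω = i u} (ev X x)

/-- P(Y^D = 1 | Z_U = i_U, X = x). -/
noncomputable def pDU {V U : Type*} (μ : Measure Ω) (Y : V → Ω → Bool) (D : Finset V)
    (Z : U → Ω → Bool) (X : Ω → Bool) (i : U → Bool) (x : Bool) : ℝ :=
  cpr μ {ω | ∀ v ∈ D, Y v ω = true} ({ω | ∀ u, Z u ω = i u} ∩ ev X x)

lemma pr_split (μ : Measure Ω) [IsProbabilityMeasure μ] {Z : Ω → Bool}
    (hZm : Measurable Z) (A : Set Ω) :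
    pr μ A = pr μ (ev Z true ∩ A) + pr μ (ev Z false ∩ A) := by
  have ht : MeasurableSet (ev Z true) := hZm (measurableSet_singleton true)
  have key := measure_inter_add_diff (μ := μ) A ht
  have h1 : A ∩ ev Z true = ev Z true ∩ A := Set.inter_comm _ _
  have h2 : A \ ev Z true = ev Z false ∩ A := by
    ext ω; simp only [Set.mem_diff, ev, Set.mem_inter_iff, Set.mem_setOf_eq]
    cases h : Z ω <;> simp [h]
  rw [h1, h2] at key
  unfold pr
  rw [← key, ENNReal.toReal_add (measure_ne_top μ _) (measure_ne_top μ _)]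

theorem stmt_1 (μ : Measure Ω) [IsProbabilityMeasure μ]
    (Y Z X : Ω → Bool) (hYm : Measurable Y) (hZm : Measurable Z) (hXm : Measurable X)
    (hXpos : ∀ x : Bool, 0 < pr μ (ev X x))
    (hZX : ∀ z x : Bool, 0 < pr μ (ev Z z ∩ ev X x))
    (hYpos : ∀ z x : Bool, 0 < pY μ Y Z X z x)
    (hZ01 : ∀ x : Bool, 0 < pZ μ Z X x ∧ pZ μ Z X x < 1)
    (α θZ θX θZX αZ θZx θYX lam : ℝ)
    (hα : α = Real.log (pY μ Y Z X false false))
    (hθZ : θZ = Real.log (pY μ Y Z X true false / pY μ Y Z X false false))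
    (hθX : θX = Real.log (pY μ Y Z X false true / pY μ Y Z X false false))
    (hθZX : θZX = Real.log ((pY μ Y Z X true true * pY μ Y Z X false false) /
      (pY μ Y Z X true false * pY μ Y Z X false true)))
    (hreg : ∀ z x : Bool, Real.log (pY μ Y Z X z x) =
      α + θZ * (if z then 1 else 0) + θX * (if x then 1 else 0) +
        θZX * ((if z then 1 else 0) * (if x then 1 else 0)))
    (hαZ : αZ = Real.log (pZ μ Z X false))
    (hθZx : θZx = Real.log (pZ μ Z X true / pZ μ Z X false))
    (hθYX : θYX = Real.log (pYm μ Y X true / pYm μ Y X false))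
    (hlam : lam = Real.log
      ((Real.exp (θZ + θZX) * Real.exp (αZ + θZx) + 1 - Real.exp (αZ + θZx)) /
        (Real.exp θZ * Real.exp αZ + 1 - Real.exp αZ))) :
    θYX = θX + lam := by
  -- abbreviations
  set p00 := pY μ Y Z X false false with hp00
  set p10 := pY μ Y Z X true false with hp10
  set p01 := pY μ Y Z X false true with hp01
  set p11 := pY μ Y Z X true true with hp11
  set q0 := pZ μ Z X false with hq0
  set q1 := pZ μ Z X true with hq1
  have hp00pos := hYpos false false
  have hp10pos := hYpos true false
  have hp01pos := hYpos false true
  have hp11pos := hYpos true true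
  have hq0pos := (hZ01 false).1
  have hq0lt := (hZ01 false).2
  have hq1pos := (hZ01 true).1
  have hq1lt := (hZ01 true).2
  have hp00ne : p00 ≠ 0 := ne_of_gt hp00pos
  have hp10ne : p10 ≠ 0 := ne_of_gt hp10pos
  have hp01ne : p01 ≠ 0 := ne_of_gt hp01pos
  have hq0ne : q0 ≠ 0 := ne_of_gt hq0pos
  -- law of total probability
  have key : ∀ x : Bool, pYm μ Y X x =
      pY μ Y Z X true x * pZ μ Z X x + pY μ Y Z X false x * (1 - pZ μ Z X x) := by
    intro x
    have he := hXpos x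
    have hct := hZX true x
    have hcf := hZX false x
    have h1 : pr μ (ev X x) = pr μ (ev Z true ∩ ev X x) + pr μ (ev Z false ∩ ev X x) :=
      pr_split μ hZm _
    have h2 : pr μ (ev Y true ∩ ev X x) =
        pr μ (ev Y true ∩ (ev Z true ∩ ev X x)) + pr μ (ev Y true ∩ (ev Z false ∩ ev X x)) := by
      rw [pr_split μ hZm (ev Y true ∩ ev X x), Set.inter_left_comm, Set.inter_left_comm (ev Z false)]
    unfold pYm pY pZ cpr
    rw [h2, h1]
    have h3 : (1 : ℝ) - pr μ (ev Z true ∩ ev X x) /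
        (pr μ (ev Z true ∩ ev X x) + pr μ (ev Z false ∩ ev X x)) =
        pr μ (ev Z false ∩ ev X x) /
        (pr μ (ev Z true ∩ ev X x) + pr μ (ev Z false ∩ ev X x)) := by
      field_simp
      ring
    rw [h3]
    field_simp
  have hm1 : pYm μ Y X true = p11 * q1 + p01 * (1 - q1) := key true
  have hm0 : pYm μ Y X false = p10 * q0 + p00 * (1 - q0) := key false
  have hm1pos : 0 < pYm μ Y X true := by
    rw [hm1]; have := sub_pos.mpr hq1lt; positivity
  have hm0pos : 0 < pYm μ Y X false := by
    rw [hm0]; have := sub_pos.mpr hq0lt; positivity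
  -- exponentials
  have eθZ : Real.exp θZ = p10 / p00 := by
    rw [hθZ, Real.exp_log (by positivity)]
  have eθZX : Real.exp θZX = p11 * p00 / (p10 * p01) := by
    rw [hθZX, Real.exp_log (by positivity)]
  have eαZ : Real.exp αZ = q0 := by
    rw [hαZ, Real.exp_log hq0pos]
  have eαθ : Real.exp (αZ + θZx) = q1 := by
    rw [Real.exp_add, eαZ, hθZx, Real.exp_log (by positivity)]
    field_simp
  have eZZX : Real.exp (θZ + θZX) = p11 / p01 := by
    rw [Real.exp_add, eθZ, eθZX]
    field_simp
  -- numerator and denominator of lam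
  have hN : Real.exp (θZ + θZX) * Real.exp (αZ + θZx) + 1 - Real.exp (αZ + θZx) =
      pYm μ Y X true / p01 := by
    rw [eZZX, eαθ, hm1]; field_simp; ring
  have hD : Real.exp θZ * Real.exp αZ + 1 - Real.exp αZ = pYm μ Y X false / p00 := by
    rw [eθZ, eαZ, hm0]; field_simp; ring
  rw [hθYX, hθX, hlam, hN, hD,
    Real.log_div (ne_of_gt hm1pos) (ne_of_gt hm0pos),
    Real.log_div (ne_of_gt hp01pos) (ne_of_gt hp00pos),
    Real.log_div (by positivity) (by positivity),
    Real.log_div (ne_of_gt hm1pos) (ne_of_gt hp01pos),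
    Real.log_div (ne_of_gt hm0pos) (ne_of_gt hp00pos)]
  ring
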